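/- Let n ≥ 1, p, q > 1, β > 0, and let K, Q : ℝⁿ → ℝ satisfy 0 < K(x) ≤ β and 0 < Q(x) ≤ β for all x. Let (u,v) be a pair of positive C² functions on ℝⁿ solving −Δu + u = K(x) v^q and −Δv + v = Q(x) u^p, and suppose that both u and v attain a global maximum at the point 0. Then u(0) ≥ β^{−(q+1)/(pq−1)} and v(0) ≥ β^{−(p+1)/(pq−1)}. -/

import Mathlib

open MeasureTheory Filter Topology

noncomputable section

abbrev Euc (n : ℕ) := EuclideanSpace ℝ (Fin n)

/-- The Laplacian: sum of second partial derivatives. -/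
def lap {n : ℕ} (u : Euc n → ℝ) (x : Euc n) : ℝ :=
  ∑ i : Fin n, fderiv ℝ (fun y => fderiv ℝ u y (EuclideanSpace.single i 1)) x
    (EuclideanSpace.single i 1)

lemma second_deriv_nonpos_of_max (g : ℝ → ℝ) (hg : ContDiff ℝ 2 g)
    (hmax : ∀ t, g t ≤ g 0) : deriv (deriv g) 0 ≤ 0 := by
  by_contra h
  push_neg at h
  have hdg : Differentiable ℝ g := hg.differentiable (by norm_num)
  have hdg2 : Differentiable ℝ (deriv g) := by
    have hg' : ContDiff ℝ (1+1) g := by norm_num; exact hg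
    exact ((contDiff_succ_iff_deriv.mp hg').2.2).differentiable one_ne_zero
  have h0 : deriv g 0 = 0 := (IsLocalMax.deriv_eq_zero (Eventually.of_forall hmax))
  have hd : HasDerivAt (deriv g) (deriv (deriv g) 0) 0 := (hdg2 0).hasDerivAt
  rw [hasDerivAt_iff_tendsto_slope] at hd
  have ev : ∀ᶠ t in 𝓝[≠] (0:ℝ), 0 < slope (deriv g) 0 t :=
    hd.eventually (eventually_gt_nhds h)
  have ev' : ∀ᶠ t in 𝓝[>] (0:ℝ), 0 < slope (deriv g) 0 t :=
    ev.filter_mono (nhdsWithin_mono 0 (fun t ht => ne_of_gt ht))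
  obtain ⟨δ, hδ, hsub⟩ := mem_nhdsGT_iff_exists_Ioo_subset.mp ev'
  have hδ0 : (0:ℝ) < δ := hδ
  have hpos : ∀ t ∈ Set.Ioo (0:ℝ) δ, 0 < deriv g t := by
    intro t ht
    have hs := hsub ht
    simp only [Set.mem_setOf_eq, slope_def_field, h0] at hs
    have : 0 < (deriv g t - 0) / (t - 0) := by
      simpa [div_eq_inv_mul, slope, h0] using hs
    have ht0 : 0 < t := ht.1
    rcases div_pos_iff.mp this with ⟨ha, _⟩ | ⟨_, hb⟩
    · linarith
    · linarith
  have hmono : StrictMonoOn g (Set.Icc 0 δ) := by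
    apply strictMonoOn_of_deriv_pos (convex_Icc 0 δ) hg.continuous.continuousOn
    intro t ht
    rw [interior_Icc] at ht
    exact hpos t ht
  have : g 0 < g δ := hmono (Set.left_mem_Icc.mpr hδ0.le) (Set.right_mem_Icc.mpr hδ0.le) hδ0
  exact absurd (hmax δ) (not_le.mpr this)

lemma lap_nonpos_of_max {n : ℕ} (u : Euc n → ℝ) (hu : ContDiff ℝ 2 u)
    (hmax : ∀ x, u x ≤ u 0) : lap u 0 ≤ 0 := by
  apply Finset.sum_nonpos
  intro i _
  set e : Euc n := EuclideanSpace.single i 1 with he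
  set g : ℝ → ℝ := fun t => u (t • e) with hgdef
  have hsm : ContDiff ℝ 2 (fun t : ℝ => t • e) := contDiff_id.smul contDiff_const
  have hg : ContDiff ℝ 2 g := hu.comp hsm
  have hgmax : ∀ t, g t ≤ g 0 := by
    intro t
    simp only [hgdef, zero_smul]
    exact hmax _
  have key := second_deriv_nonpos_of_max g hg hgmax
  have hud : Differentiable ℝ u := hu.differentiable (by norm_num)
  have hderivg : deriv g = fun t => fderiv ℝ u (t • e) e := by
    funext t
    have h1 : HasDerivAt (fun s : ℝ => s • e) e t := by
      simpa using (hasDerivAt_id t).smul_const e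
    exact ((hud (t • e)).hasFDerivAt.comp_hasDerivAt t h1).deriv
  have hf1 : ContDiff ℝ 1 (fun y => fderiv ℝ u y e) :=
    (hu.fderiv_right (m := 1) (by norm_num)).clm_apply contDiff_const
  have h2 : deriv (deriv g) 0 = fderiv ℝ (fun y => fderiv ℝ u y e) 0 e := by
    rw [hderivg]
    have h1 : HasDerivAt (fun s : ℝ => s • e) e 0 := by
      simpa using (hasDerivAt_id (0:ℝ)).smul_const e
    have := ((hf1.differentiable one_ne_zero (0 • e)).hasFDerivAt.comp_hasDerivAt 0 h1).deriv
    simpa [zero_smul, Function.comp_def] using this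
  rw [← h2]
  exact key

lemma alg_bound (p q β a b : ℝ) (hp : 1 < p) (hq : 1 < q) (hβ : 0 < β)
    (ha : 0 < a) (hb : 0 < b) (h1 : a ≤ β * b ^ q) (h2 : b ≤ β * a ^ p) :
    β ^ (-((q+1)/(p*q-1))) ≤ a := by
  have hr : 0 < p * q - 1 := by nlinarith
  have hap : (0:ℝ) < a ^ p := Real.rpow_pos_of_pos ha p
  have hbq : b ^ q ≤ (β * a ^ p) ^ q :=
    Real.rpow_le_rpow hb.le h2 (by linarith)
  have hexp : (β * a ^ p) ^ q = β ^ q * a ^ (p * q) := by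
    rw [Real.mul_rpow hβ.le hap.le, ← Real.rpow_mul ha.le]
  have h3 : a ≤ β ^ (q + 1) * a ^ (p * q) := by
    calc a ≤ β * b ^ q := h1
    _ ≤ β * (β ^ q * a ^ (p * q)) := by
        rw [← hexp]; exact mul_le_mul_of_nonneg_left hbq hβ.le
    _ = β ^ (q + 1) * a ^ (p * q) := by
        rw [Real.rpow_add hβ, Real.rpow_one]; ring
  have hsplit : a ^ (p * q) = a * a ^ (p * q - 1) := by
    have he : p * q = 1 + (p * q - 1) := by ring
    rw [he, Real.rpow_add ha, Real.rpow_one]; ring_nf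
  have h4 : 1 ≤ β ^ (q + 1) * a ^ (p * q - 1) := by
    have := h3
    rw [hsplit] at this
    have haa : a * 1 ≤ a * (β ^ (q + 1) * a ^ (p * q - 1)) := by
      rw [mul_one]; calc a ≤ β ^ (q + 1) * (a * a ^ (p * q - 1)) := this
      _ = a * (β ^ (q + 1) * a ^ (p * q - 1)) := by ring
    exact le_of_mul_le_mul_left haa ha
  have h5 : β ^ (-(q + 1)) ≤ a ^ (p * q - 1) := by
    rw [Real.rpow_neg hβ.le, inv_le_iff_one_le_mul₀ (Real.rpow_pos_of_pos hβ _)]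
    calc (1:ℝ) ≤ β ^ (q + 1) * a ^ (p * q - 1) := h4
    _ = a ^ (p * q - 1) * β ^ (q + 1) := by ring
  have h6 : (β ^ (-(q + 1))) ^ ((p * q - 1)⁻¹) ≤ (a ^ (p * q - 1)) ^ ((p * q - 1)⁻¹) :=
    Real.rpow_le_rpow (Real.rpow_nonneg hβ.le _) h5 (by positivity)
  rw [← Real.rpow_mul hβ.le, ← Real.rpow_mul ha.le,
    mul_inv_cancel₀ (ne_of_gt hr), Real.rpow_one] at h6
  have : -(q + 1) * (p * q - 1)⁻¹ = -((q + 1) / (p * q - 1)) := by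
    field_simp
  rwa [this] at h6

/-- Uniform positive lower bounds at a common global maximum point of a positive solution pair:
`u(0) ≥ β^{-(q+1)/(pq-1)}` and `v(0) ≥ β^{-(p+1)/(pq-1)}`. -/
theorem lower_bound_at_maximum_point
    {n : ℕ} (hn : 1 ≤ n) (p q β : ℝ) (hp : 1 < p) (hq : 1 < q) (hβ : 0 < β)
    (K Q : Euc n → ℝ) (hK : ∀ x, 0 < K x ∧ K x ≤ β) (hQ : ∀ x, 0 < Q x ∧ Q x ≤ β)
    (u v : Euc n → ℝ) (hu : ContDiff ℝ 2 u) (hv : ContDiff ℝ 2 v)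
    (hupos : ∀ x, 0 < u x) (hvpos : ∀ x, 0 < v x)
    (hequ : ∀ x, -lap u x + u x = K x * v x ^ q)
    (heqv : ∀ x, -lap v x + v x = Q x * u x ^ p)
    (humax : ∀ x, u x ≤ u 0) (hvmax : ∀ x, v x ≤ v 0) :
    β ^ (-((q+1)/(p*q-1))) ≤ u 0 ∧ β ^ (-((p+1)/(p*q-1))) ≤ v 0 := by
  have hlu : lap u 0 ≤ 0 := lap_nonpos_of_max u hu humax
  have hlv : lap v 0 ≤ 0 := lap_nonpos_of_max v hv hvmax
  have h1 : u 0 ≤ β * v 0 ^ q := by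
    have := hequ 0
    have hKb := hK 0
    have hv0 : (0:ℝ) < v 0 ^ q := Real.rpow_pos_of_pos (hvpos 0) q
    nlinarith [mul_le_mul_of_nonneg_right hKb.2 hv0.le]
  have h2 : v 0 ≤ β * u 0 ^ p := by
    have := heqv 0
    have hQb := hQ 0
    have hu0 : (0:ℝ) < u 0 ^ p := Real.rpow_pos_of_pos (hupos 0) p
    nlinarith [mul_le_mul_of_nonneg_right hQb.2 hu0.le]
  constructor
  · exact alg_bound p q β (u 0) (v 0) hp hq hβ (hupos 0) (hvpos 0) h1 h2
  · have := alg_bound q p β (v 0) (u 0) hq hp hβ (hvpos 0) (hupos 0) h2 h1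
    rwa [mul_comm q p] at this
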